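/- Define K(n) = Σ_{i,j=0}^{n} C(i+j,i)·C(i+j,j). Then lim_{n→∞} K(n)/C(2n,n)² = 16/9. -/

import Mathlib

open Filter Finset Topology
open scoped Nat

/-- middle binomial coefficient of row m -/
private def midC (m : ℕ) : ℕ := m.choose (m / 2)

private lemma midC_step (m : ℕ) (hm : 1 ≤ m) : 3 * midC m ≤ 2 * midC (m + 1) := by
  unfold midC
  rcases Nat.even_or_odd m with ⟨a, ha⟩ | ⟨a, ha⟩
  · subst ha
    have ha1 : 1 ≤ a := by omega
    have h2 : (a + a) / 2 = a := by omega
    have h3 : (a + a + 1) / 2 = a := by omega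
    rw [h2, h3]
    -- (2a+1) * C(2a,a) = C(2a+1, a+1) * (a+1)
    have key := Nat.add_one_mul_choose_eq (a + a) a
    have hsymm : (a + a + 1).choose (a + 1) = (a + a + 1).choose a := by
      have := Nat.choose_symm (n := a + a + 1) (k := a + 1) (by omega)
      simpa [show a + a + 1 - (a + 1) = a by omega] using this.symm
    rw [hsymm] at key
    -- key : (a+a+1) * (a+a).choose a = (a+a+1).choose a * (a+1)
    nlinarith [Nat.choose_pos (show a ≤ a + a by omega)]
  · subst ha
    have h2 : (2 * a + 1) / 2 = a := by omega
    have h3 : (2 * a + 1 + 1) / 2 = a + 1 := by omega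
    rw [h2, h3]
    have : (2 * a + 1 + 1).choose (a + 1) = (2 * a + 1).choose a + (2 * a + 1).choose (a + 1) := by
      exact Nat.choose_succ_succ (2 * a + 1) a
    have hsymm : (2 * a + 1).choose (a + 1) = (2 * a + 1).choose a := by
      have := Nat.choose_symm (n := 2 * a + 1) (k := a + 1) (by omega)
      simpa [show 2 * a + 1 - (a + 1) = a by omega] using this.symm
    omega

private lemma midC_chain (s m : ℕ) (h : s + 1 ≤ m) :
    3 ^ s * midC (m - s) ≤ 2 ^ s * midC m := by
  induction s with
  | zero => simp
  | succ s ih =>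
    have hs : s + 1 ≤ m := by omega
    have h1 : 1 ≤ m - (s + 1) := by omega
    have h2 : m - (s + 1) + 1 = m - s := by omega
    have hstep := midC_step (m - (s + 1)) h1
    rw [h2] at hstep
    calc 3 ^ (s + 1) * midC (m - (s + 1)) = 3 ^ s * (3 * midC (m - (s + 1))) := by ring
      _ ≤ 3 ^ s * (2 * midC (m - s)) := Nat.mul_le_mul_left _ hstep
      _ = 2 * (3 ^ s * midC (m - s)) := by ring
      _ ≤ 2 * (2 ^ s * midC m) := Nat.mul_le_mul_left _ (ih hs)
      _ = 2 ^ (s + 1) * midC m := by ring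

private lemma midC_bound (s m : ℕ) (h : s ≤ m) :
    2 * (3 ^ s * midC (m - s)) ≤ 3 * (2 ^ s * midC m) := by
  rcases eq_or_lt_of_le h with rfl | hlt
  · rcases Nat.eq_zero_or_pos s with rfl | hs
    · simp [midC]
    · have := midC_chain (s - 1) s (by omega)
      have h1 : s - (s - 1) = 1 := by omega
      rw [h1] at this
      have hm0 : midC (s - s) = 1 := by simp [midC]
      have hm1 : midC 1 = 1 := by simp [midC]
      rw [hm1] at this
      rw [hm0]
      have e3 : 3 ^ s = 3 * 3 ^ (s - 1) := by
        rw [← pow_succ']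
        congr 1
        omega
      have e2 : 2 ^ s = 2 * 2 ^ (s - 1) := by
        rw [← pow_succ']
        congr 1
        omega
      rw [e3, e2]
      nlinarith
  · have := midC_chain s m hlt
    omega

private lemma reindex (n : ℕ) :
    ∑ i ∈ range (n + 1), ∑ j ∈ range (n + 1), (i + j).choose i * (i + j).choose j
      = ∑ t ∈ range (2 * n + 1), ∑ k ∈ range (min t (2 * n - t) + 1),
          ((2 * n - t).choose (k + (n - t))) ^ 2 := by
  rw [← Finset.sum_product', Finset.sum_sigma']
  refine Finset.sum_nbij' (fun p => ⟨2 * n - (p.1 + p.2), p.1 - (p.1 + p.2 - n)⟩)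
    (fun q => (q.2 + (n - q.1), (2 * n - q.1) - (q.2 + (n - q.1)))) ?_ ?_ ?_ ?_ ?_
  · rintro ⟨i, j⟩ hp
    simp only [Finset.mem_product, Finset.mem_range] at hp
    simp only [Finset.mem_sigma, Finset.mem_range]
    omega
  · rintro ⟨t, k⟩ hq
    simp only [Finset.mem_sigma, Finset.mem_range] at hq
    simp only [Finset.mem_product, Finset.mem_range]
    omega
  · rintro ⟨i, j⟩ hp
    simp only [Finset.mem_product, Finset.mem_range] at hp
    simp only [Prod.mk.injEq]
    constructor <;> omega
  · rintro ⟨t, k⟩ hq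
    simp only [Finset.mem_sigma, Finset.mem_range] at hq
    have h1 : 2 * n - (k + (n - t) + (2 * n - t - (k + (n - t)))) = t := by omega
    have h2 : k + (n - t) - (k + (n - t) + (2 * n - t - (k + (n - t))) - n) = k := by omega
    simp only [h1, h2]
  · rintro ⟨i, j⟩ hp
    simp only [Finset.mem_product, Finset.mem_range] at hp
    have h1 : 2 * n - (2 * n - (i + j)) = i + j := by omega
    have h2 : i - (i + j - n) + (n - (2 * n - (i + j))) = i := by omega
    simp only [h1, h2]
    have hsymm : (i + j).choose j = (i + j).choose i := by
      have := Nat.choose_symm (n := i + j) (k := i) (by omega)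
      rw [show i + j - i = j by omega] at this
      exact this
    rw [hsymm, sq]

private lemma choose_ratio_nat (n t k : ℕ) (ht : t ≤ n) (hk : k ≤ t) :
    (2 * n - t).choose (k + (n - t)) * (2 * n).descFactorial t
      = (2 * n).choose n * (n.descFactorial (t - k) * n.descFactorial k) := by
  set p := t - k with hp
  have hi : k + (n - t) = n - p := by omega
  rw [hi]
  refine Nat.eq_of_mul_eq_mul_right
    (Nat.mul_pos (Nat.factorial_pos (n - p)) (Nat.factorial_pos (n - k))) ?_
  have h1 : (2 * n - t).choose (n - p) * (n - p)! * ((2 * n - t) - (n - p))! = (2 * n - t)! :=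
    Nat.choose_mul_factorial_mul_factorial (by omega)
  rw [show (2 * n - t) - (n - p) = n - k by omega] at h1
  have h2 : (2 * n - t)! * (2 * n).descFactorial t = (2 * n)! := by
    rw [mul_comm]
    have := Nat.factorial_mul_descFactorial (show t ≤ 2 * n by omega)
    rw [mul_comm] at this
    rw [mul_comm ((2*n).descFactorial t) _ ] at this ⊢
    exact this
  have h3 : (n - p)! * n.descFactorial p = n ! := Nat.factorial_mul_descFactorial (by omega)
  have h4 : (n - k)! * n.descFactorial k = n ! := Nat.factorial_mul_descFactorial (by omega)
  have h5 : (2 * n).choose n * n ! * (2 * n - n)! = (2 * n)! :=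
    Nat.choose_mul_factorial_mul_factorial (by omega)
  rw [show 2 * n - n = n by omega] at h5
  calc (2 * n - t).choose (n - p) * (2 * n).descFactorial t * ((n - p)! * (n - k)!)
      = ((2 * n - t).choose (n - p) * (n - p)! * (n - k)!) * (2 * n).descFactorial t := by ring
    _ = (2 * n - t)! * (2 * n).descFactorial t := by rw [h1]
    _ = (2 * n)! := h2
    _ = (2 * n).choose n * n ! * n ! := by rw [h5]
    _ = (2 * n).choose n * ((n - p)! * n.descFactorial p) * ((n - k)! * n.descFactorial k) := by
        rw [h3, h4]
    _ = (2 * n).choose n * (n.descFactorial p * n.descFactorial k) * ((n - p)! * (n - k)!) := by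
        ring

private lemma lim_sub_div (a : ℕ) :
    Tendsto (fun n : ℕ => ((n : ℝ) - a) / n) atTop (𝓝 1) := by
  have h : Tendsto (fun n : ℕ => 1 - (a : ℝ) * (n : ℝ)⁻¹) atTop (𝓝 1) := by
    have h0 := tendsto_inv_atTop_nhds_zero_nat (𝕜 := ℝ)
    simpa using tendsto_const_nhds.sub (h0.const_mul (a : ℝ))
  apply h.congr'
  filter_upwards [eventually_ge_atTop 1] with n hn
  have hn0 : (n : ℝ) ≠ 0 := Nat.cast_ne_zero.mpr (by omega)
  field_simp

private lemma lim_half (c : ℕ) :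
    Tendsto (fun n : ℕ => (n : ℝ) / (2 * n - c)) atTop (𝓝 (1 / 2)) := by
  have h : Tendsto (fun n : ℕ => 1 / (2 - (c : ℝ) * (n : ℝ)⁻¹)) atTop (𝓝 (1 / 2)) := by
    have h0 := tendsto_inv_atTop_nhds_zero_nat (𝕜 := ℝ)
    have h1 : Tendsto (fun n : ℕ => 2 - (c : ℝ) * (n : ℝ)⁻¹) atTop (𝓝 2) := by
      simpa using tendsto_const_nhds.sub (h0.const_mul (c : ℝ))
    simpa [Pi.div_def] using (tendsto_const_nhds (x := (1:ℝ))).div h1 (by norm_num)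
  apply h.congr'
  filter_upwards [eventually_ge_atTop (c + 1)] with n hn
  have hn0 : (n : ℝ) ≠ 0 := Nat.cast_ne_zero.mpr (by omega)
  have hcn : (c : ℝ) < n := by exact_mod_cast (by omega : c < n)
  have hd : 2 * (n : ℝ) - c ≠ 0 := by nlinarith [Nat.cast_nonneg (α := ℝ) n]
  have hd2 : 2 - (c : ℝ) * (n : ℝ)⁻¹ ≠ 0 := by
    rw [sub_ne_zero]
    intro h'
    apply hd
    field_simp at h' ⊢
    nlinarith [h']
  field_simp

private lemma cast_df (m s : ℕ) (hs : s ≤ m) :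
    ((m.descFactorial s : ℕ) : ℝ) = ∏ i ∈ range s, ((m : ℝ) - i) := by
  rw [Nat.descFactorial_eq_prod_range, Nat.cast_prod]
  refine Finset.prod_congr rfl fun i hi => ?_
  have : i ≤ m := by simp only [mem_range] at hi; omega
  push_cast [this]
  ring

private lemma ratio_tendsto (t k : ℕ) (hk : k ≤ t) :
    Tendsto (fun n : ℕ => ((2 * n - t).choose (k + (n - t)) : ℝ) / ((2 * n).choose n : ℝ))
      atTop (𝓝 ((1 / 2 : ℝ) ^ t)) := by
  obtain ⟨p, rfl⟩ : ∃ p, t = k + p := ⟨t - k, by omega⟩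
  have main : Tendsto (fun n : ℕ =>
      (∏ a ∈ range p, (((n : ℝ) - a) / n)) * (∏ b ∈ range k, (((n : ℝ) - b) / n))
        * ∏ c ∈ range (k + p), ((n : ℝ) / (2 * n - c))) atTop (𝓝 ((1 / 2 : ℝ) ^ (k + p))) := by
    have h1 : Tendsto (fun n : ℕ => ∏ a ∈ range p, (((n : ℝ) - a) / n)) atTop (𝓝 1) := by
      simpa using tendsto_finset_prod (range p)
        (fun a (_ : a ∈ range p) => lim_sub_div a)
    have h2 : Tendsto (fun n : ℕ => ∏ b ∈ range k, (((n : ℝ) - b) / n)) atTop (𝓝 1) := by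
      simpa using tendsto_finset_prod (range k)
        (fun b (_ : b ∈ range k) => lim_sub_div b)
    have h3 : Tendsto (fun n : ℕ => ∏ c ∈ range (k + p), ((n : ℝ) / (2 * n - c)))
        atTop (𝓝 ((1 / 2 : ℝ) ^ (k + p))) := by
      have := tendsto_finset_prod (range (k + p))
        (fun c (_ : c ∈ range (k + p)) => lim_half c)
      simpa using this
    simpa using (h1.mul h2).mul h3
  apply main.congr'
  filter_upwards [eventually_ge_atTop (k + p + 1)] with n hn
  have hn0 : (n : ℝ) ≠ 0 := Nat.cast_ne_zero.mpr (by omega)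
  have hfac : ∀ c ∈ range (k + p), (2 * (n : ℝ) - c) ≠ 0 := by
    intro c hc
    simp only [mem_range] at hc
    have hcn : (c : ℝ) < n := by exact_mod_cast (by omega : c < n)
    nlinarith [Nat.cast_nonneg (α := ℝ) n]
  have hD : (∏ c ∈ range (k + p), (2 * (n : ℝ) - c)) ≠ 0 := prod_ne_zero_iff.mpr hfac
  have hC : ((2 * n).choose n : ℝ) ≠ 0 :=
    Nat.cast_ne_zero.mpr (Nat.choose_pos (by omega)).ne'
  have hdf2 : (((2 * n).descFactorial (k + p) : ℕ) : ℝ)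
      = ∏ c ∈ range (k + p), (2 * (n : ℝ) - c) := by
    rw [cast_df (2 * n) (k + p) (by omega)]
    refine Finset.prod_congr rfl fun c hc => ?_
    push_cast
    ring
  have hnat := choose_ratio_nat n (k + p) k (by omega) (by omega)
  rw [Nat.add_sub_cancel_left] at hnat
  have hXr : ((2 * n - (k + p)).choose (k + (n - (k + p))) : ℝ)
        * (((2 * n).descFactorial (k + p) : ℕ) : ℝ)
      = ((2 * n).choose n : ℝ) * ((((n.descFactorial p : ℕ)) : ℝ) * ((n.descFactorial k : ℕ) : ℝ)) := by
    exact_mod_cast congrArg (Nat.cast : ℕ → ℝ) hnat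
  have key : ((2 * n - (k + p)).choose (k + (n - (k + p))) : ℝ) / ((2 * n).choose n : ℝ)
      = (∏ a ∈ range p, ((n : ℝ) - a)) * (∏ b ∈ range k, ((n : ℝ) - b))
          / ∏ c ∈ range (k + p), (2 * (n : ℝ) - c) := by
    rw [div_eq_div_iff hC hD, ← hdf2, ← cast_df n p (by omega), ← cast_df n k (by omega)]
    linear_combination hXr
  rw [key, Finset.prod_div_distrib, Finset.prod_div_distrib, Finset.prod_div_distrib]
  simp only [Finset.prod_const, Finset.card_range]
  field_simp
  ring

private noncomputable def fseq (n t : ℕ) : ℝ :=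
  if t ≤ 2 * n then
    (∑ k ∈ range (min t (2 * n - t) + 1), ((2 * n - t).choose (k + (n - t)) : ℝ) ^ 2)
      / ((2 * n).choose n : ℝ) ^ 2
  else 0

private lemma fseq_nonneg (n t : ℕ) : 0 ≤ fseq n t := by
  unfold fseq
  split
  · positivity
  · exact le_refl 0

private lemma fseq_tendsto (t : ℕ) :
    Tendsto (fun n => fseq n t) atTop (𝓝 (((t : ℝ) + 1) * (1 / 4) ^ t)) := by
  have hval : ((1 / 2 : ℝ) ^ t) ^ 2 = (1 / 4 : ℝ) ^ t := by
    rw [← pow_mul, mul_comm, pow_mul]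
    norm_num
  have hterm : ∀ k ∈ range (t + 1),
      Tendsto (fun n : ℕ =>
        (((2 * n - t).choose (k + (n - t)) : ℝ) / ((2 * n).choose n : ℝ)) ^ 2)
        atTop (𝓝 ((1 / 4 : ℝ) ^ t)) := by
    intro k hk
    simp only [mem_range] at hk
    have := (ratio_tendsto t k (by omega)).pow 2
    rwa [hval] at this
  have hsum := tendsto_finset_sum (range (t + 1)) hterm
  rw [Finset.sum_const, Finset.card_range, nsmul_eq_mul] at hsum
  have hcast : ((t + 1 : ℕ) : ℝ) = (t : ℝ) + 1 := by push_cast; ring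
  rw [hcast] at hsum
  apply hsum.congr'
  filter_upwards [eventually_ge_atTop t] with n hn
  have h2t : t ≤ 2 * n := by omega
  have hmin : min t (2 * n - t) = t := by omega
  unfold fseq
  rw [if_pos h2t, hmin, Finset.sum_div]
  refine Finset.sum_congr rfl fun k hk => ?_
  rw [div_pow]

private lemma fseq_bound (n t : ℕ) : ‖fseq n t‖ ≤ 9 / 4 * ((t : ℝ) + 1) * (4 / 9) ^ t := by
  rw [Real.norm_eq_abs, abs_of_nonneg (fseq_nonneg n t)]
  unfold fseq
  split
  · rename_i ht
    set c := (2 * n).choose n with hc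
    set M := midC (2 * n - t) with hM
    have hcpos : 0 < c := Nat.choose_pos (by omega)
    have hcR : (0 : ℝ) < (c : ℝ) := by exact_mod_cast hcpos
    -- numerator bound in ℕ
    have hnat : (∑ k ∈ range (min t (2 * n - t) + 1), ((2 * n - t).choose (k + (n - t))) ^ 2)
        ≤ (t + 1) * M ^ 2 := by
      calc (∑ k ∈ range (min t (2 * n - t) + 1), ((2 * n - t).choose (k + (n - t))) ^ 2)
          ≤ ∑ _k ∈ range (min t (2 * n - t) + 1), M ^ 2 := by
            refine Finset.sum_le_sum fun k hk => ?_
            exact Nat.pow_le_pow_left (Nat.choose_le_middle _ _) 2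
        _ = (min t (2 * n - t) + 1) * M ^ 2 := by
            rw [Finset.sum_const, Finset.card_range, smul_eq_mul]
        _ ≤ (t + 1) * M ^ 2 := Nat.mul_le_mul_right _ (by omega)
    have hmid : midC (2 * n) = c := by
      unfold midC
      rw [show 2 * n / 2 = n by omega]
    have hB := midC_bound t (2 * n) ht
    rw [hmid] at hB
    have hBR : 2 * ((3 : ℝ) ^ t * (M : ℝ)) ≤ 3 * (2 ^ t * (c : ℝ)) := by exact_mod_cast hB
    have hMR : (0 : ℝ) ≤ (M : ℝ) := Nat.cast_nonneg M
    have hsq : (2 * ((3 : ℝ) ^ t * M)) * (2 * ((3 : ℝ) ^ t * M))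
        ≤ (3 * ((2 : ℝ) ^ t * c)) * (3 * ((2 : ℝ) ^ t * c)) :=
      mul_self_le_mul_self (by positivity) hBR
    have h33 : (3 : ℝ) ^ t * 3 ^ t = 9 ^ t := by rw [← mul_pow]; norm_num
    have h22 : (2 : ℝ) ^ t * 2 ^ t = 4 ^ t := by rw [← mul_pow]; norm_num
    have h1 : 4 * (9 : ℝ) ^ t * (M : ℝ) ^ 2 ≤ 9 * 4 ^ t * (c : ℝ) ^ 2 := by nlinarith [hsq]
    have hMc : (M : ℝ) ^ 2 ≤ 9 / 4 * (4 / 9) ^ t * (c : ℝ) ^ 2 := by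
      rw [div_pow]
      rw [show (9 : ℝ) / 4 * ((4 : ℝ) ^ t / 9 ^ t) * (c : ℝ) ^ 2
          = 9 * 4 ^ t * (c : ℝ) ^ 2 / (4 * 9 ^ t) by ring]
      rw [le_div_iff₀ (by positivity)]
      nlinarith [h1]
    rw [div_le_iff₀ (by positivity)]
    calc ((∑ k ∈ range (min t (2 * n - t) + 1), ((2 * n - t).choose (k + (n - t)) : ℝ) ^ 2))
        ≤ ((t : ℝ) + 1) * (M : ℝ) ^ 2 := by exact_mod_cast hnat
      _ ≤ ((t : ℝ) + 1) * (9 / 4 * (4 / 9) ^ t * (c : ℝ) ^ 2) := by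
          apply mul_le_mul_of_nonneg_left hMc (by positivity)
      _ = 9 / 4 * ((t : ℝ) + 1) * (4 / 9) ^ t * (c : ℝ) ^ 2 := by ring
  · positivity

private lemma bound_summable :
    Summable (fun t : ℕ => 9 / 4 * ((t : ℝ) + 1) * (4 / 9) ^ t) := by
  have ha : Summable (fun t : ℕ => (t : ℝ) * (4 / 9) ^ t) := by
    simpa using summable_pow_mul_geometric_of_norm_lt_one (R := ℝ) 1 (r := 4 / 9)
      (by rw [Real.norm_eq_abs, abs_of_pos (by norm_num)]; norm_num)
  have hb : Summable (fun t : ℕ => ((4 : ℝ) / 9) ^ t) :=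
    summable_geometric_of_lt_one (by norm_num) (by norm_num)
  have := (ha.add hb).mul_left (9 / 4 : ℝ)
  apply this.congr
  intro t
  ring

private lemma limit_tsum : ∑' t : ℕ, ((t : ℝ) + 1) * (1 / 4) ^ t = 16 / 9 := by
  have hs1 : Summable (fun t : ℕ => (t : ℝ) * (1 / 4) ^ t) := by
    simpa using summable_pow_mul_geometric_of_norm_lt_one (R := ℝ) 1 (r := 1 / 4)
      (by rw [Real.norm_eq_abs, abs_of_pos (by norm_num)]; norm_num)
  have hs2 : Summable (fun t : ℕ => ((1 : ℝ) / 4) ^ t) :=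
    summable_geometric_of_lt_one (by norm_num) (by norm_num)
  calc ∑' t : ℕ, ((t : ℝ) + 1) * (1 / 4) ^ t
      = ∑' t : ℕ, ((t : ℝ) * (1 / 4) ^ t + (1 / 4) ^ t) := by
        apply tsum_congr; intro t; ring
    _ = (∑' t : ℕ, (t : ℝ) * (1 / 4) ^ t) + ∑' t : ℕ, ((1 : ℝ) / 4) ^ t :=
        Summable.tsum_add hs1 hs2
    _ = (1 / 4) / (1 - 1 / 4) ^ 2 + (1 - 1 / 4)⁻¹ := by
        rw [tsum_coe_mul_geometric_of_norm_lt_one (by rw [Real.norm_eq_abs, abs_of_pos (by norm_num)]; norm_num),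
          tsum_geometric_of_lt_one (by norm_num) (by norm_num)]
    _ = 16 / 9 := by norm_num

open Filter in
theorem k_tendsto :
    Tendsto (fun n : ℕ =>
      ((∑ i ∈ Finset.range (n + 1), ∑ j ∈ Finset.range (n + 1),
          Nat.choose (i + j) i * Nat.choose (i + j) j : ℕ) : ℝ) /
        ((2 * n).choose n : ℝ) ^ 2)
      atTop (nhds (16 / 9)) := by
  have main := tendsto_tsum_of_dominated_convergence (𝓕 := atTop) (f := fseq)
    (g := fun t : ℕ => ((t : ℝ) + 1) * (1 / 4) ^ t)
    (bound := fun t : ℕ => 9 / 4 * ((t : ℝ) + 1) * (4 / 9) ^ t)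
    bound_summable fseq_tendsto (Eventually.of_forall fun n => fun t => fseq_bound n t)
  rw [limit_tsum] at main
  apply main.congr
  intro n
  have hzero : ∀ t ∉ range (2 * n + 1), fseq n t = 0 := by
    intro t ht
    simp only [mem_range] at ht
    unfold fseq
    rw [if_neg (by omega)]
  rw [tsum_eq_sum hzero]
  have hstep : ∀ t ∈ range (2 * n + 1), fseq n t
      = (∑ k ∈ range (min t (2 * n - t) + 1), ((2 * n - t).choose (k + (n - t)) : ℝ) ^ 2)
        / ((2 * n).choose n : ℝ) ^ 2 := by
    intro t ht
    simp only [mem_range] at ht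
    unfold fseq
    rw [if_pos (by omega)]
  rw [Finset.sum_congr rfl hstep, ← Finset.sum_div]
  congr 1
  rw [reindex n]
  push_cast
  rfl
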